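/- arXiv:math/0206225 — 4 statements merged into one kernel-verified Lean document; each statement's English description precedes it below -/
import Mathlib

section
/- Let ℓ be a positive odd integer and 0 ≤ m ≤ ℓ. For every partition μ ∈ F_1^m(Δ_ℓ), the pair (μ[0], (μ[1])') consisting of the first component of the 2-quotient of μ and the conjugate of the second component is complementary relative to the rectangle □(ℓ+1−m, m). -/
open scoped BigOperators

/-- A partition, represented canonically as the multiset of its (positive) parts. -/
structure Ptn where
  parts : Multiset ℕ
  pos : ∀ x ∈ parts, 0 < x

namespace Ptn

/-- Build a partition from an arbitrary multiset of naturals by discarding zero parts. -/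
def of (s : Multiset ℕ) : Ptn :=
  ⟨s.filter (fun x => 0 < x), fun _ hx => (Multiset.mem_filter.mp hx).2⟩

/-- The empty partition. -/
def empty : Ptn := ⟨0, by simp⟩

/-- The `i`-th largest part (`0`-indexed); `0` if `i` is at least the number of parts. -/
def part (l : Ptn) (i : ℕ) : ℕ :=
  ((l.parts.sort (· ≤ ·)).reverse).getD i 0

/-- The number of (positive) parts. -/
def length (l : Ptn) : ℕ := Multiset.card l.parts

/-- The size `|λ|`, i.e. the number being partitioned. -/
def size (l : Ptn) : ℕ := l.parts.sum

/-- A partition is strict if all its parts are distinct. -/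
def Strict (l : Ptn) : Prop := l.parts.Nodup

/-- The conjugate partition. -/
def conj (l : Ptn) : Ptn :=
  of ((Multiset.range (l.part 0)).map
    (fun j => Multiset.card (l.parts.filter (fun x => j < x))))

end Ptn

/-- The rectangular partition `□(n,m)` with `n` rows of length `m`. -/
def rect (n m : ℕ) : Ptn := Ptn.of (Multiset.replicate n m)

/-- The partition obtained by multiplying every part by `r`. -/
def scaleP (r : ℕ) (l : Ptn) : Ptn := Ptn.of (l.parts.map (fun a => r * a))

/-- Diagram containment: every part of `small` is at most the corresponding part of `big`. -/
def Contains (big small : Ptn) : Prop := ∀ i, small.part i ≤ big.part i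

/-- The beta-set (first-column hook lengths) `{λ_i + m - 1 - i : i < m}` of `l`,
computed with `m` beads (`m` at least the number of parts). -/
def betaSet (l : Ptn) (m : ℕ) : Finset ℕ :=
  (Finset.range m).image (fun i => l.part i + (m - 1 - i))

/-- The partition encoded by a finite set of bead positions: each bead contributes a part
equal to the number of empty positions (holes) below it. -/
def ptnOfBeads (B : Finset ℕ) : Ptn :=
  Ptn.of (B.val.map (fun p => p - (B.filter (fun q => q < p)).card))

/-- Levels of the beads on runner `k` of the `r`-abacus of `l`,
drawn with `r * l.length` beads (a multiple of `r`). -/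
def runnerLevels (r : ℕ) (l : Ptn) (k : ℕ) : Finset ℕ :=
  (Finset.range (l.part 0 + r * l.length + 1)).filter
    (fun s => r * s + k ∈ betaSet l (r * l.length))

/-- The `k`-th component `λ[k]` of the `r`-quotient of `l`. -/
def quotP (r : ℕ) (l : Ptn) (k : ℕ) : Ptn := ptnOfBeads (runnerLevels r l k)

/-- The `r`-core of `l`: push all beads of the `r`-abacus down as far as possible. -/
def coreP (r : ℕ) (l : Ptn) : Ptn :=
  ptnOfBeads ((Finset.range r).biUnion
    (fun k => (Finset.range (runnerLevels r l k).card).image (fun s => r * s + k)))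

/-- The key of the bead at position `p` for the `r`-numbering of the beads `B`:
a bead which is the `j`-th lowest bead on runner `k` gets key `r * j + k`. -/
def rKey (r : ℕ) (B : Finset ℕ) (p : ℕ) : ℕ :=
  r * (B.filter (fun q => q % r = p % r ∧ q < p)).card + p % r

/-- The number of inversions between the natural (increasing-position) numbering of the
beads `B` and the numbering by increasing `key`. -/
def inversions (key : ℕ → ℕ) (B : Finset ℕ) : ℕ :=
  ((B ×ˢ B).filter (fun pq => pq.1 < pq.2 ∧ key pq.2 < key pq.1)).card

/-- Exponent of the `r`-sign `δ_r`. -/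
def rSignExp (r : ℕ) (l : Ptn) : ℕ :=
  inversions (rKey r (betaSet l (r * l.length))) (betaSet l (r * l.length))

/-- The `r`-sign `δ_r(λ) ∈ {±1}`. -/
def rSign (r : ℕ) (l : Ptn) : ℤ := (-1) ^ rSignExp r l

/-- The key of the bead at position `p` for the `3`-bar numbering of the beads `B` of the
`3`-bar abacus: first the beads of runner `0` in increasing order, then the pairs of beads
on runners `2` and `1` paired off by increasing level (runner-`2` bead before
runner-`1` bead), then the remaining unpaired beads in increasing order. -/
def barKey (B : Finset ℕ) (p : ℕ) : ℕ :=
  let n0 := (B.filter (fun q => q % 3 = 0)).card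
  let t := min ((B.filter (fun q => q % 3 = 1)).card)
              ((B.filter (fun q => q % 3 = 2)).card)
  let rk := (B.filter (fun q => q % 3 = p % 3 ∧ q < p)).card
  if p % 3 = 0 then rk
  else if rk < t then (if p % 3 = 2 then n0 + 2 * rk else n0 + 2 * rk + 1)
  else n0 + 2 * t + (rk - t)

/-- Exponent of the `3`-bar sign `δ̄_3`.  The beads of the `3`-bar abacus of a strict
partition sit at the positions given by the parts. -/
def barSignExp (l : Ptn) : ℕ :=
  inversions (barKey l.parts.toFinset) l.parts.toFinset

/-- The `3`-bar sign `δ̄_3(λ) ∈ {±1}` of a strict partition. -/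
def barSign3 (l : Ptn) : ℤ := (-1) ^ barSignExp l

/-- The double `D(λ) = (λ_1,…,λ_l | λ_1 - 1,…,λ_l - 1)` (Frobenius notation)
of a strict partition `λ`, constructed row by row. -/
noncomputable def double (l : Ptn) : Ptn :=
  Ptn.of ((Multiset.range (l.length + l.part 0)).map (fun i =>
    (if i < l.length then l.part i + 1 else 0) +
      ((Finset.range (min i l.length)).filter (fun j => i + 1 ≤ j + l.part j)).card))

/-- The second component `λ^b[1] = D(λ)[1]` of the `3`-bar quotient of a strict
partition `λ`. -/
noncomputable def barQuot1 (l : Ptn) : Ptn := quotP 3 (double l) 1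

/-- The staircase-like strict partition `Λ_ℓ = (3ℓ-2, 3ℓ-5, …, 7, 4, 1)`. -/
def LamP (ℓ : ℕ) : Ptn := Ptn.of ((Multiset.range ℓ).map (fun i => 3 * i + 1))

/-- The staircase partition `Δ_ℓ = (ℓ, ℓ-1, …, 1)`. -/
def DelP (ℓ : ℕ) : Ptn := Ptn.of (Multiset.range (ℓ + 1))

/-- `F_1^m(Λ_ℓ)`: strict partitions obtained from `Λ_ℓ` by adding `m` cells, each
labelled `1`, where the cell in (0-indexed) column `j` is labelled `1` iff `j % 3 = 1`
(each row reads `0,1,0,0,1,0,…`). -/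
def F1Lam (ℓ m : ℕ) : Set Ptn :=
  {mu | mu.Strict ∧ Contains mu (LamP ℓ) ∧ mu.size = (LamP ℓ).size + m ∧
    ∀ i j, (LamP ℓ).part i ≤ j → j < mu.part i → j % 3 = 1}

/-- `F_1^m(Δ_ℓ)`: partitions obtained from `Δ_ℓ` by adding `m` cells, each labelled `1`,
where the cell `(i,j)` is labelled `1` iff `i + j` is odd. -/
def F1Del (ℓ m : ℕ) : Set Ptn :=
  {mu | Contains mu (DelP ℓ) ∧ mu.size = (DelP ℓ).size + m ∧
    ∀ i j, (DelP ℓ).part i ≤ j → j < mu.part i → (i + j) % 2 = 1}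

/-- `(α, β)` is complementary relative to the rectangle `□(n,m)`:
`α ⊆ □(n,m)` and `β_i = m - α_{n+1-i}` for `1 ≤ i ≤ n` (0-indexed below). -/
def Complementary (n m : ℕ) (a b : Ptn) : Prop :=
  a.length ≤ n ∧ a.part 0 ≤ m ∧ b.length ≤ n ∧
    ∀ i < n, b.part i = m - a.part (n - 1 - i)

/-- `W(n,m)`: the set of `(n,m)`-balanced partitions, i.e. partitions of `2nm` with at
most `2n` parts satisfying `μ_i + μ_{2n+1-i} = 2m` for `1 ≤ i ≤ n` (0-indexed below). -/
def W (n m : ℕ) : Set Ptn :=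
  {mu | mu.size = 2 * n * m ∧ mu.length ≤ 2 * n ∧
    ∀ i < n, mu.part i + mu.part (2 * n - 1 - i) = 2 * m}

/-! ### The ring of symmetric functions

We realise the ring of symmetric functions (with rational coefficients) as the
polynomial ring `ℚ[p_1, p_2, …]` in the power sums: the variable `X n` of
`MvPolynomial ℕ ℚ` stands for the power sum `p_{n+1}`. -/

abbrev SymF := MvPolynomial ℕ ℚ

open MvPolynomial

/-- `z_ρ = ∏ a^{m_a} m_a!` for a partition given as a multiset `ρ`. -/
def zval (s : Multiset ℕ) : ℚ :=
  s.toFinset.prod (fun a => (a : ℚ) ^ s.count a * (Nat.factorial (s.count a) : ℚ))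

/-- The power sum product `p_ρ` of a multiset `ρ`. -/
noncomputable def pMult (s : Multiset ℕ) : SymF :=
  (s.map (fun a => (X (a - 1) : SymF))).prod

/-- The complete homogeneous symmetric function `h_n = Σ_{ρ ⊢ n} z_ρ⁻¹ p_ρ`. -/
noncomputable def hSym (n : ℕ) : SymF :=
  ∑ ρ : Nat.Partition n, (zval ρ.parts)⁻¹ • pMult ρ.parts

/-- `h_k` for an integer index, vanishing for negative `k`. -/
noncomputable def hz (k : ℤ) : SymF := if k < 0 then 0 else hSym k.toNat

/-- The Schur function `S_λ`, via the Jacobi–Trudi formula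
`S_λ = det(h_{λ_i - i + j})`. -/
noncomputable def schur (l : Ptn) : SymF :=
  Matrix.det (Matrix.of (fun i j : Fin l.length =>
    hz ((l.part i.val : ℤ) + (j.val : ℤ) - (i.val : ℤ))))

/-- The plethysm `p_r ∘ f`: the algebra endomorphism sending each power sum `p_k`
to `p_{rk}`, i.e. substituting `x_i^r` for each variable `x_i`. -/
noncomputable def pleth (r : ℕ) (f : SymF) : SymF :=
  MvPolynomial.aeval (fun n => (X (r * (n + 1) - 1) : SymF)) f

/-- The `z`-weight of a power-sum monomial (exponent vector `d`). -/
def zfac (d : ℕ →₀ ℕ) : ℚ :=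
  d.prod (fun i e => ((i : ℚ) + 1) ^ e * (Nat.factorial e : ℚ))

/-- The Hall inner product, for which `⟨p_ρ, p_σ⟩ = δ_{ρσ} z_ρ` and the Schur
functions are orthonormal. -/
noncomputable def hall (f g : SymF) : ℚ :=
  f.support.sum (fun d => f.coeff d * g.coeff d * zfac d)

/-- The multi-Littlewood–Richardson coefficient `LR^λ_{μ^0,…,μ^{r-1}}`:
the multiplicity of `S_λ` in `S_{μ^0} ⋯ S_{μ^{r-1}}`. -/
noncomputable def LRmulti (lam : Ptn) (r : ℕ) (q : ℕ → Ptn) : ℚ :=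
  hall ((Finset.range r).prod (fun k => schur (q k))) (schur lam)

/-- The Littlewood–Richardson coefficient `LR^λ_{α,β}`:
the multiplicity of `S_λ` in `S_α · S_β`. -/
noncomputable def LR2 (lam a b : Ptn) : ℚ := hall (schur a * schur b) (schur lam)

/-- The irreducible symmetric group character `χ^μ(ρ)`, via the Frobenius formula
`χ^μ_ρ = ⟨S_μ, p_ρ⟩`. -/
noncomputable def chi (mu rho : Ptn) : ℚ := hall (schur mu) (pMult rho.parts)

/-- Symmetric functions in two alphabets `u`, `v`: `X (inl n)` is `p_{n+1}(u)` and
`X (inr n)` is `p_{n+1}(v)`. -/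
abbrev SymF2 := MvPolynomial (ℕ ⊕ ℕ) ℚ

/-- `f ↦ f(u)`. -/
noncomputable def toU : SymF →ₐ[ℚ] SymF2 :=
  aeval (fun n => (X (Sum.inl n) : SymF2))

/-- `f ↦ f(v)`. -/
noncomputable def toV : SymF →ₐ[ℚ] SymF2 :=
  aeval (fun n => (X (Sum.inr n) : SymF2))

/-- `f ↦ f(u - v)`, the difference of alphabets: `p_k ↦ p_k(u) - p_k(v)`. -/
noncomputable def toUV : SymF →ₐ[ℚ] SymF2 :=
  aeval (fun n => (X (Sum.inl n) : SymF2) - X (Sum.inr n))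

/-! ### Auxiliary infrastructure for `stmt12` -/

namespace Ptn

/-- The parts of a partition, sorted in decreasing order. -/
def dlist (l : Ptn) : List ℕ := (l.parts.sort (· ≤ ·)).reverse

lemma part_def' (l : Ptn) (i : ℕ) : l.part i = (dlist l).getD i 0 := rfl

lemma coe_dlist (l : Ptn) : (↑(dlist l) : Multiset ℕ) = l.parts := by
  rw [dlist, Multiset.coe_reverse, Multiset.sort_eq]

lemma length_dlist (l : Ptn) : (dlist l).length = l.length := by
  have := congrArg Multiset.card (coe_dlist l)
  simpa [length] using this

lemma dlist_pairwise (l : Ptn) : (dlist l).Pairwise (fun a b => b ≤ a) := by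
  rw [dlist, List.pairwise_reverse]
  exact Multiset.pairwise_sort ..

lemma part_antitone (l : Ptn) {i j : ℕ} (h : i ≤ j) : l.part j ≤ l.part i := by
  rw [part_def', part_def']
  rcases eq_or_lt_of_le h with rfl | hlt
  · exact le_rfl
  rcases Nat.lt_or_ge j (dlist l).length with hj | hj
  · have hi : i < (dlist l).length := lt_trans hlt hj
    rw [List.getD_eq_getElem _ _ hj, List.getD_eq_getElem _ _ hi]
    have := List.pairwise_iff_get.mp (dlist_pairwise l) ⟨i, hi⟩ ⟨j, hj⟩ hlt
    simpa [List.get_eq_getElem] using this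
  · rw [List.getD_eq_default _ _ hj]
    exact Nat.zero_le _

lemma part_pos_iff (l : Ptn) (i : ℕ) : 0 < l.part i ↔ i < l.length := by
  rw [part_def', ← length_dlist]
  rcases Nat.lt_or_ge i (dlist l).length with hi | hi
  · rw [List.getD_eq_getElem _ _ hi]
    have hmem : (dlist l)[i] ∈ l.parts := by
      rw [← coe_dlist]
      exact_mod_cast List.getElem_mem _
    simp only [hi, iff_true]
    exact l.pos _ hmem
  · rw [List.getD_eq_default _ _ hi]
    simp only [lt_self_iff_false, false_iff, not_lt]
    omega

lemma part_zero_or_mem (l : Ptn) (i : ℕ) : l.part i = 0 ∨ l.part i ∈ l.parts := by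
  rw [part_def']
  rcases Nat.lt_or_ge i (dlist l).length with hi | hi
  · right
    rw [List.getD_eq_getElem _ _ hi, ← coe_dlist]
    exact_mod_cast List.getElem_mem _
  · left; rw [List.getD_eq_default _ _ hi]

lemma mem_le_part_zero (l : Ptn) {x : ℕ} (hx : x ∈ l.parts) : x ≤ l.part 0 := by
  rw [← coe_dlist] at hx
  obtain ⟨⟨k, hk⟩, rfl⟩ := List.mem_iff_get.mp (by exact_mod_cast hx)
  rw [part_def']
  have h0 : 0 < (dlist l).length := Nat.pos_of_ne_zero (by intro h; rw [h] at hk; omega)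
  rw [List.getD_eq_getElem _ _ h0]
  rcases Nat.eq_zero_or_pos k with rfl | hkpos
  · simp [List.get_eq_getElem]
  · have := List.pairwise_iff_get.mp (dlist_pairwise l) ⟨0, h0⟩ ⟨k, hk⟩ hkpos
    simpa [List.get_eq_getElem] using this

private lemma list_sum_eq (w : List ℕ) : w.sum = ∑ i ∈ Finset.range w.length, w.getD i 0 := by
  induction w with
  | nil => simp
  | cons a t ih =>
    rw [List.sum_cons, List.length_cons, Finset.sum_range_succ', ih]
    simp only [List.getD_cons_succ, List.getD_cons_zero]
    omega

lemma size_eq_sum (l : Ptn) {K : ℕ} (hK : l.length ≤ K) :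
    l.size = ∑ i ∈ Finset.range K, l.part i := by
  have h1 : l.size = (dlist l).sum := by
    rw [size, ← coe_dlist, Multiset.sum_coe]
  rw [h1, list_sum_eq, length_dlist]
  refine Finset.sum_subset (by simp; omega) ?_
  intro x _ hx
  simp only [Finset.mem_range, not_lt] at hx
  rw [← part_def']
  have := (part_pos_iff l x).not
  omega

/-- The fundamental computation lemma: if the parts of `l` are the positive values of an
antitone function `f` on `range L` (with `f` vanishing from `L` on), then `l.part = f`. -/
lemma part_eq_of (l : Ptn) (f : ℕ → ℕ) (L : ℕ)
    (hmono : ∀ i j, i ≤ j → f j ≤ f i)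
    (hvan : f L = 0)
    (hparts : l.parts = ((Multiset.range L).map f).filter (fun x => 0 < x)) :
    ∀ i, l.part i = f i := by
  have hex : ∃ K, f K = 0 := ⟨L, hvan⟩
  set K := Nat.find hex with hKdef
  have hfK : f K = 0 := Nat.find_spec hex
  have hKL : K ≤ L := Nat.find_le hvan
  have hpos : ∀ i < K, 0 < f i := fun i hi =>
    Nat.pos_of_ne_zero (Nat.find_min hex hi)
  have hzero : ∀ i, K ≤ i → f i = 0 := fun i hi => Nat.le_zero.mp (hfK ▸ hmono K i hi)
  -- multiset identity
  have hms : ((List.range K).map f : Multiset ℕ) = l.parts := by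
    rw [hparts]
    have hr : (Multiset.range L) = Multiset.range K + (Multiset.range (L - K)).map (K + ·) := by
      rw [← Multiset.range_add]; congr 1; omega
    rw [hr, Multiset.map_add, Multiset.filter_add]
    rw [Multiset.filter_eq_self.mpr, Multiset.filter_eq_nil.mpr, add_zero]
    · simp [Multiset.range, Multiset.map_coe]
    · intro a ha
      simp only [Multiset.mem_map, Multiset.mem_range] at ha
      obtain ⟨b, ⟨b', hb', rfl⟩, rfl⟩ := ha
      have := hzero (K + b') (by omega)
      omega
    · intro a ha
      simp only [Multiset.mem_map, Multiset.mem_range] at ha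
      obtain ⟨b, hb, rfl⟩ := ha
      exact hpos b hb
  have hsorted : ((List.range K).map f).reverse.Pairwise (· ≤ ·) := by
    rw [List.pairwise_reverse]
    refine List.Pairwise.map f ?_ (List.pairwise_lt_range (n := K))
    intro a b hab
    exact hmono a b (le_of_lt hab)
  have hlist : l.parts.sort (· ≤ ·) = ((List.range K).map f).reverse := by
    refine List.Perm.eq_of_pairwise' (Multiset.pairwise_sort ..) hsorted ?_
    rw [← Multiset.coe_eq_coe, Multiset.sort_eq, Multiset.coe_reverse, hms]
  have hdl : dlist l = (List.range K).map f := by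
    rw [dlist, hlist, List.reverse_reverse]
  intro i
  rw [part_def', hdl]
  rcases Nat.lt_or_ge i K with hi | hi
  · rw [List.getD_eq_getElem _ _ (by simpa using hi)]
    simp
  · rw [List.getD_eq_default _ _ (by simpa using hi)]
    exact (hzero i hi).symm

lemma conj_part (l : Ptn) :
    ∀ j, l.conj.part j = Multiset.card (l.parts.filter (fun x => j < x)) := by
  refine part_eq_of _ _ (l.part 0) ?_ ?_ ?_
  · intro i j hij
    exact Multiset.card_le_card (Multiset.monotone_filter_right _ (fun a ha => lt_of_le_of_lt hij ha))
  · rw [Multiset.card_eq_zero, Multiset.filter_eq_nil]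
    intro a ha
    exact not_lt.mpr (mem_le_part_zero l ha)
  · rfl

end Ptn

lemma delP_part (ℓ : ℕ) : ∀ i, (DelP ℓ).part i = ℓ - i := by
  refine Ptn.part_eq_of _ _ ℓ (fun i j h => by omega) (by omega) ?_
  have hfin : (Finset.range (ℓ+1)).filter (fun x => 0 < x)
      = (Finset.range ℓ).image (fun i => ℓ - i) := by
    ext x
    simp only [Finset.mem_filter, Finset.mem_range, Finset.mem_image]
    constructor
    · rintro ⟨h1, h2⟩; exact ⟨ℓ - x, by omega, by omega⟩
    · rintro ⟨i, hi, rfl⟩; omega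
  have hinj : Set.InjOn (fun i => ℓ - i) (Finset.range ℓ) := by
    intro a ha b hb hab
    simp only [Finset.coe_range, Set.mem_Iio] at ha hb
    simp only at hab; omega
  have hval := congrArg Finset.val hfin
  rw [Finset.filter_val, Finset.range_val, Finset.image_val_of_injOn hinj,
    Finset.range_val] at hval
  show (Multiset.range (ℓ+1)).filter (fun x => 0 < x) = _
  rw [hval]
  symm
  rw [Multiset.filter_eq_self]
  intro a ha
  simp only [Multiset.mem_map, Multiset.mem_range] at ha
  obtain ⟨b, hb, rfl⟩ := ha
  omega

/-- The combinatorial step in the proof of Theorem 4.1: for odd `ℓ`, `0 ≤ m ≤ ℓ`,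
and `μ ∈ F_1^m(Δ_ℓ)`, the pair `(μ[0], (μ[1])')` is complementary relative to the
rectangle `□(ℓ+1-m, m)`. -/
theorem stmt12 (ℓ m : ℕ) (hodd : Odd ℓ) (hm : m ≤ ℓ) (μ : Ptn) (hμ : μ ∈ F1Del ℓ m) :
    Complementary (ℓ + 1 - m) m (quotP 2 μ 0) ((quotP 2 μ 1).conj) := by
  obtain ⟨hcont, hsize, hlab⟩ := hμ
  obtain ⟨h, hℓ⟩ := hodd
  have hℓ1 : 1 ≤ ℓ := by omega
  -- the indicator of added cells
  set ε : ℕ → ℕ := fun i => μ.part i - (ℓ - i) with hεdef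
  have hpart : ∀ i ≤ ℓ, μ.part i = (ℓ - i) + ε i := by
    intro i hi
    have := hcont i
    rw [delP_part] at this
    simp only [hεdef]
    omega
  have hε1 : ∀ i ≤ ℓ, ε i ≤ 1 := by
    intro i hi
    by_contra hgt
    have hp : ℓ - i + 2 ≤ μ.part i := by have := hpart i hi; omega
    have h1 := hlab i (ℓ - i) (by rw [delP_part]) (by omega)
    have h2 := hlab i (ℓ - i + 1) (by rw [delP_part]; omega) (by omega)
    omega
  have hpart0 : ∀ i, ℓ < i → μ.part i = 0 := by
    intro i hi
    have hstep : μ.part (ℓ+1) = 0 := by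
      by_contra hpos
      have h1 := hlab (ℓ+1) 0 (by rw [delP_part]; omega) (by omega)
      omega
    have := μ.part_antitone (show ℓ+1 ≤ i by omega)
    omega
  set e := ε ℓ with hedef
  have he1 : e ≤ 1 := hε1 ℓ le_rfl
  have hlen : μ.length = ℓ + e := by
    have hpℓ : μ.part ℓ = e := by have := hpart ℓ le_rfl; omega
    have hpℓ1 : μ.part (ℓ+1) = 0 := hpart0 _ (by omega)
    have hpℓm : 0 < μ.part (ℓ-1) := by have := hpart (ℓ-1) (by omega); omega
    have i1 := μ.part_pos_iff ℓ
    have i2 := μ.part_pos_iff (ℓ+1)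
    have i3 := μ.part_pos_iff (ℓ-1)
    omega
  have hlenle : μ.length ≤ ℓ + 1 := by omega
  have hsum : ∑ i ∈ Finset.range (ℓ+1), ε i = m := by
    have hsμ := μ.size_eq_sum hlenle
    have hsδ : (DelP ℓ).size = ∑ i ∈ Finset.range (ℓ+1), (ℓ - i) := by
      rw [(DelP ℓ).size_eq_sum (K := ℓ+1) (by
        have hd := ((DelP ℓ).part_pos_iff ℓ)
        rw [delP_part] at hd
        omega)]
      exact Finset.sum_congr rfl (fun i _ => delP_part ℓ i)
    rw [Finset.sum_congr rfl (fun i hi => hpart i (by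
      have := Finset.mem_range.mp hi; omega))] at hsμ
    rw [Finset.sum_add_distrib] at hsμ
    omega
  set Sf : ℕ → Finset ℕ := fun k => (Finset.range (ℓ+1)).filter (fun i => ε i = k) with hSf
  set cnt : ℕ → ℕ → ℕ := fun k i => ((Sf k).filter (fun j => i < j)).card with hcnt
  have hS1card : (Sf 1).card = m := by
    have hsplit := Finset.sum_filter_add_sum_filter_not (Finset.range (ℓ+1))
      (fun i => ε i = 1) ε
    have h1 : ∑ i ∈ (Finset.range (ℓ+1)).filter (fun i => ε i = 1), ε i = (Sf 1).card := by
      rw [Finset.sum_congr rfl (fun x hx => (Finset.mem_filter.mp hx).2)]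
      simp [hSf]
    have h2 : ∑ i ∈ (Finset.range (ℓ+1)).filter (fun i => ¬ ε i = 1), ε i = 0 := by
      refine Finset.sum_eq_zero ?_
      intro x hx
      have hx' := Finset.mem_filter.mp hx
      have := hε1 x (by have := Finset.mem_range.mp hx'.1; omega)
      omega
    omega
  have hScard : (Sf 0).card + (Sf 1).card = ℓ + 1 := by
    have he : Sf 0 = (Finset.range (ℓ+1)).filter (fun i => ¬ ε i = 1) := by
      refine Finset.filter_congr ?_
      intro x hx
      have := hε1 x (by have := Finset.mem_range.mp hx; omega)
      omega
    rw [he, add_comm]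
    have := Finset.card_filter_add_card_filter_not
      (s := Finset.range (ℓ+1)) (p := fun i => ε i = 1)
    rw [Finset.card_range] at this
    exact this
  have hS0card : (Sf 0).card = ℓ + 1 - m := by omega
  have hSmem : ∀ k x, x ∈ Sf k ↔ (x ≤ ℓ ∧ ε x = k) := by
    intro k x
    simp only [hSf, Finset.mem_filter, Finset.mem_range]
    omega
  have hcnts : ∀ k k', ((k = 0 ∧ k' = 1) ∨ (k = 1 ∧ k' = 0)) → ∀ i ≤ ℓ,
      cnt k i + cnt k' i = ℓ - i := by
    intro k k' hkk' i hi
    have hdisj : Disjoint ((Sf k).filter (fun j => i < j)) ((Sf k').filter (fun j => i < j)) := by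
      rw [Finset.disjoint_left]
      intro a ha ha'
      have h1 := (hSmem k a).mp (Finset.mem_filter.mp ha).1
      have h2 := (hSmem k' a).mp (Finset.mem_filter.mp ha').1
      omega
    have hun : ((Sf k).filter (fun j => i < j)) ∪ ((Sf k').filter (fun j => i < j))
        = (Finset.Ioc i ℓ) := by
      ext x
      simp only [Finset.mem_union, Finset.mem_filter, Finset.mem_Ioc, hSmem]
      have := hε1 x
      constructor
      · rintro (⟨⟨hx1, hx2⟩, hx3⟩ | ⟨⟨hx1, hx2⟩, hx3⟩) <;> omega
      · rintro ⟨hx1, hx2⟩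
        have := hε1 x hx2
        omega
    have := Finset.card_union_of_disjoint hdisj
    rw [hun, Nat.card_Ioc] at this
    simp only [hcnt]
    omega
  have hcnt_anti : ∀ k i j, i ≤ j → cnt k j ≤ cnt k i := by
    intro k i j hij
    exact Finset.card_le_card (Finset.monotone_filter_right _
      (fun a _ ha => lt_of_le_of_lt hij ha))
  have hcnt_le : ∀ k i, cnt k i ≤ (Sf k).card :=
    fun k i => Finset.card_le_card (Finset.filter_subset _ _)
  -- the key computation of the 2-quotient
  have key : ∀ k k', ((k = 0 ∧ k' = 1) ∨ (k = 1 ∧ k' = 0)) →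
      (quotP 2 μ k).parts =
        ((Sf k).val.map (fun i => cnt k' i)).filter (fun x => 0 < x) := by
    intro k k' hkk'
    have hbeta : ∀ x, x ∈ betaSet μ (2 * μ.length) ↔
        ∃ i, i < 2*(ℓ+e) ∧ μ.part i + (2*(ℓ+e) - 1 - i) = x := by
      intro x
      simp only [betaSet, hlen, Finset.mem_image, Finset.mem_range]
    have hrun : runnerLevels 2 μ k =
        Finset.range (h+e) ∪ (Sf k).image (fun i => 3*h+1+e - i) := by
      ext s
      simp only [runnerLevels, Finset.mem_filter, Finset.mem_range, hbeta,
        Finset.mem_union, Finset.mem_image]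
      constructor
      · rintro ⟨hs, i, hiN, heq⟩
        rcases le_or_gt i ℓ with hi | hi
        · have hpi := hpart i hi
          have hei := hε1 i hi
          right
          refine ⟨i, ?_, by omega⟩
          rw [hSmem]
          omega
        · have hpi := hpart0 i hi
          left; omega
      · intro hs
        have hp0 : μ.part 0 = ℓ + ε 0 := by have := hpart 0 (by omega); omega
        rcases hs with hs | ⟨i, hi, rfl⟩
        · refine ⟨by rw [hlen]; omega, 2*(ℓ+e) - 1 - (2*s+k), by omega, ?_⟩
          rw [hpart0 _ (by omega)]
          omega
        · rw [hSmem] at hi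
          refine ⟨by rw [hlen]; omega, i, by omega, ?_⟩
          rw [hpart i (by omega)]
          omega
    have hdisj : Disjoint (Finset.range (h+e)) ((Sf k).image (fun i => 3*h+1+e - i)) := by
      rw [Finset.disjoint_left]
      intro a ha haIm
      rw [Finset.mem_range] at ha
      obtain ⟨i, hi, rfl⟩ := Finset.mem_image.mp haIm
      rw [hSmem] at hi
      omega
    have hinj : Set.InjOn (fun i => 3*h+1+e - i) (Sf k) := by
      intro a ha b hb hab
      rw [Finset.mem_coe, hSmem] at ha hb
      simp only at hab
      omega
    have hqp : (quotP 2 μ k).parts =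
        ((runnerLevels 2 μ k).val.map
          (fun p => p - ((runnerLevels 2 μ k).filter (fun q => q < p)).card)).filter
            (fun x => 0 < x) := rfl
    -- card of beads below a range bead
    have hlow : ∀ p, p < h + e →
        (((Finset.range (h+e) ∪ (Sf k).image (fun i => 3*h+1+e - i))).filter
          (fun q => q < p)).card = p := by
      intro p hp
      rw [Finset.filter_union]
      have h1 : (Finset.range (h+e)).filter (fun q => q < p) = Finset.range p := by
        ext x
        simp only [Finset.mem_filter, Finset.mem_range]
        omega
      have h2 : ((Sf k).image (fun i => 3*h+1+e - i)).filter (fun q => q < p) = ∅ := by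
        rw [Finset.filter_eq_empty_iff]
        intro x hx
        obtain ⟨i, hi, rfl⟩ := Finset.mem_image.mp hx
        rw [hSmem] at hi
        omega
      rw [h1, h2, Finset.union_empty, Finset.card_range]
    -- card of beads below an added bead
    have hhigh : ∀ i, i ∈ Sf k →
        (((Finset.range (h+e) ∪ (Sf k).image (fun i => 3*h+1+e - i))).filter
          (fun q => q < 3*h+1+e - i)).card = (h+e) + cnt k i := by
      intro i hi
      have hi' := (hSmem k i).mp hi
      rw [Finset.filter_union]
      have h1 : (Finset.range (h+e)).filter (fun q => q < 3*h+1+e - i)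
          = Finset.range (h+e) := by
        rw [Finset.filter_eq_self]
        intro x hx
        rw [Finset.mem_range] at hx
        omega
      have h2 : ((Sf k).image (fun i => 3*h+1+e - i)).filter (fun q => q < 3*h+1+e - i)
          = ((Sf k).filter (fun j => i < j)).image (fun j => 3*h+1+e - j) := by
        rw [Finset.filter_image]
        congr 1
        refine Finset.filter_congr ?_
        intro x hx
        rw [hSmem] at hx
        constructor <;> intro hh <;> omega
      have hd2 : Disjoint (Finset.range (h+e))
          (((Sf k).filter (fun j => i < j)).image (fun j => 3*h+1+e - j)) :=
        hdisj.mono_right (h2 ▸ Finset.filter_subset _ _)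
      rw [h1, h2, Finset.card_union_of_disjoint hd2, Finset.card_range,
        Finset.card_image_of_injOn (hinj.mono (Finset.coe_subset.mpr
          (Finset.filter_subset _ _)))]
    rw [hqp, hrun]
    have hBval : (Finset.range (h+e) ∪ (Sf k).image (fun i => 3*h+1+e - i)).val
        = (Finset.range (h+e)).val + ((Sf k).image (fun i => 3*h+1+e - i)).val := by
      rw [← Finset.disjUnion_eq_union _ _ hdisj]
      rfl
    rw [hBval, Multiset.map_add, Multiset.filter_add]
    have hzero1 : ((Finset.range (h+e)).val.map
        (fun p => p - ((Finset.range (h+e) ∪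
          (Sf k).image (fun i => 3*h+1+e - i)).filter (fun q => q < p)).card)).filter
        (fun x => 0 < x) = 0 := by
      rw [Multiset.filter_eq_nil]
      intro a ha
      obtain ⟨p, hp, rfl⟩ := Multiset.mem_map.mp ha
      rw [← Finset.mem_def, Finset.mem_range] at hp
      rw [hlow p hp]
      omega
    rw [hzero1, zero_add]
    rw [Finset.image_val_of_injOn hinj, Multiset.map_map]
    congr 1
    refine Multiset.map_congr rfl ?_
    intro i hi
    rw [← Finset.mem_def] at hi
    have hi' := (hSmem k i).mp hi
    simp only [Function.comp]
    rw [hhigh i hi]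
    have hsum2 := hcnts k k' hkk' i hi'.1
    have hle1 := hcnt_le k i
    have hle2 := hcnt_le k' i
    omega
  have hq0 := key 0 1 (Or.inl ⟨rfl, rfl⟩)
  have hq1 := key 1 0 (Or.inr ⟨rfl, rfl⟩)
  -- enumeration of the zero-set
  have hn1 : 1 ≤ ℓ + 1 - m := by omega
  set emb := (Sf 0).orderEmbOfFin hS0card with hembdef
  have hembmem : ∀ t, emb t ∈ Sf 0 := fun t => Finset.orderEmbOfFin_mem _ hS0card t
  have hembmono : StrictMono emb := (Sf 0).orderEmbOfFin hS0card |>.strictMono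
  have hsurj : ∀ x ∈ Sf 0, ∃ t, emb t = x := by
    intro x hx
    have hr := Finset.range_orderEmbOfFin (Sf 0) hS0card
    have : x ∈ Set.range (emb : Fin (ℓ+1-m) → ℕ) := by
      rw [hembdef, hr]
      exact hx
    exact this
  have hcnt0emb : ∀ t : Fin (ℓ+1-m), cnt 0 (emb t) = ℓ+1-m - 1 - t := by
    intro t
    have him : (Sf 0).filter (fun j => emb t < j) = (Finset.Ioi t).image (fun u => emb u) := by
      ext x
      simp only [Finset.mem_filter, Finset.mem_image, Finset.mem_Ioi]
      constructor
      · rintro ⟨hx, hlt⟩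
        obtain ⟨u, rfl⟩ := hsurj x hx
        exact ⟨u, hembmono.lt_iff_lt.mp hlt, rfl⟩
      · rintro ⟨u, hu, rfl⟩
        exact ⟨hembmem u, hembmono hu⟩
    simp only [hcnt]
    rw [him, Finset.card_image_of_injective _ hembmono.injective, Fin.card_Ioi]
  set f0 : ℕ → ℕ := fun t => if ht : t < ℓ+1-m then cnt 1 (emb ⟨t, ht⟩) else 0 with hf0
  have hparta : ∀ t, (quotP 2 μ 0).part t = f0 t := by
    refine Ptn.part_eq_of _ _ (ℓ+1-m) ?_ ?_ ?_
    · intro i j hij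
      simp only [hf0]
      rcases Nat.lt_or_ge j (ℓ+1-m) with hj | hj
      · rw [dif_pos hj, dif_pos (lt_of_le_of_lt hij hj)]
        refine hcnt_anti 1 _ _ ?_
        exact hembmono.monotone (by exact hij)
      · rw [dif_neg (by omega)]
        omega
    · simp only [hf0]
      rw [dif_neg (by omega)]
    · rw [hq0]
      congr 1
      have huniv : Finset.univ.map ((Sf 0).orderEmbOfFin hS0card).toEmbedding = Sf 0 := by
        refine Finset.eq_of_subset_of_card_le ?_ ?_
        · intro x hx
          obtain ⟨t, _, rfl⟩ := Finset.mem_map.mp hx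
          exact hembmem t
        · rw [Finset.card_map, Finset.card_univ, Fintype.card_fin, hS0card]
      have hrange : (Multiset.range (ℓ+1-m))
          = (Finset.univ : Finset (Fin (ℓ+1-m))).val.map Fin.val := by
        have h1 : Finset.range (ℓ+1-m)
            = (Finset.univ : Finset (Fin (ℓ+1-m))).map Fin.valEmbedding := by
          rw [Fin.map_valEmbedding_univ, Nat.Iio_eq_range]
        have := congrArg Finset.val h1
        rw [Finset.range_val, Finset.map_val] at this
        exact this
      rw [hrange, Multiset.map_map, ← huniv, Finset.map_val, Multiset.map_map]
      refine Multiset.map_congr rfl ?_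
      intro t _
      simp only [Function.comp, hf0]
      rw [dif_pos t.isLt]
      rfl
  refine ⟨?_, ?_, ?_, ?_⟩
  · -- length of μ[0]
    have hpp := ((quotP 2 μ 0).part_pos_iff (ℓ+1-m))
    rw [hparta] at hpp
    simp only [hf0] at hpp
    rw [dif_neg (by omega)] at hpp
    omega
  · -- first part of μ[0]
    rw [hparta]
    simp only [hf0]
    rw [dif_pos (show 0 < ℓ+1-m by omega)]
    calc cnt 1 (emb ⟨0, by omega⟩) ≤ (Sf 1).card := hcnt_le 1 _
      _ = m := hS1card
  · -- length of the conjugate of μ[1]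
    have hb1 : (quotP 2 μ 1).part 0 ≤ ℓ + 1 - m := by
      rcases Ptn.part_zero_or_mem (quotP 2 μ 1) 0 with hz | hmem
      · omega
      · rw [hq1] at hmem
        have hmem' := Multiset.mem_filter.mp hmem
        obtain ⟨i, hi, hval⟩ := Multiset.mem_map.mp hmem'.1
        rw [← hval]
        calc cnt 0 i ≤ (Sf 0).card := hcnt_le 0 i
          _ = ℓ + 1 - m := hS0card
    refine le_trans ?_ hb1
    show Multiset.card _ ≤ _
    calc Multiset.card ((quotP 2 μ 1).conj.parts)
        ≤ Multiset.card ((Multiset.range ((quotP 2 μ 1).part 0)).map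
            (fun j => Multiset.card ((quotP 2 μ 1).parts.filter (fun x => j < x)))) :=
          Multiset.card_le_card (Multiset.filter_le _ _)
      _ = (quotP 2 μ 1).part 0 := by rw [Multiset.card_map, Multiset.card_range]
  · -- the complementarity of parts
    intro i hi
    set w := emb ⟨ℓ+1-m-1-i, by omega⟩ with hwdef
    have hwmem := (hSmem 0 w).mp (hembmem ⟨ℓ+1-m-1-i, by omega⟩)
    have hcnt0w : cnt 0 w = i := by
      rw [hwdef, hcnt0emb]
      simp only
      omega
    have hpa : (quotP 2 μ 0).part (ℓ+1-m-1-i) = cnt 1 w := by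
      rw [hparta]
      simp only [hf0]
      rw [dif_pos (show ℓ+1-m-1-i < ℓ+1-m by omega)]
    rw [hpa]
    -- compute the conjugate part
    rw [Ptn.conj_part, hq1]
    rw [Multiset.filter_filter]
    have hfc : ((Sf 1).val.map (fun j => cnt 0 j)).filter (fun x => i < x ∧ 0 < x)
        = ((Sf 1).val.map (fun j => cnt 0 j)).filter (fun x => i < x) := by
      refine Multiset.filter_congr ?_
      intro x _
      omega
    rw [hfc, ← Multiset.countP_eq_card_filter, Multiset.countP_map]
    have hcards : ((Sf 1).filter (fun j => i < cnt 0 j)).card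
        = ((Sf 1).filter (fun j => j < w)).card := by
      congr 1
      refine Finset.filter_congr ?_
      intro j hj
      have hj' := (hSmem 1 j).mp hj
      constructor
      · intro hlt
        by_contra hge
        have : cnt 0 j ≤ cnt 0 w := hcnt_anti 0 w j (by omega)
        omega
      · intro hlt
        have hins : insert w ((Sf 0).filter (fun x => w < x))
            ⊆ (Sf 0).filter (fun x => j < x) := by
          intro x hx
          rcases Finset.mem_insert.mp hx with h' | hx'
          · rw [Finset.mem_filter, h']
            exact ⟨(hSmem 0 w).mpr ⟨hwmem.1, hwmem.2⟩, hlt⟩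
          · rw [Finset.mem_filter] at hx' ⊢
            exact ⟨hx'.1, by omega⟩
        have hc := Finset.card_le_card hins
        rw [Finset.card_insert_of_notMem (by
          intro hmem
          exact absurd (Finset.mem_filter.mp hmem).2 (lt_irrefl w))] at hc
        have : cnt 0 w + 1 ≤ cnt 0 j := by
          simp only [hcnt] at *
          omega
        omega
    have hfv : Multiset.card (Multiset.filter (fun a => i < cnt 0 a) (Sf 1).val)
        = ((Sf 1).filter (fun j => i < cnt 0 j)).card := rfl
    rw [hfv, hcards]
    -- the final count
    have hsplit : ((Sf 1).filter (fun j => j < w)).card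
        + ((Sf 1).filter (fun j => ¬ j < w)).card = m := by
      rw [Finset.card_filter_add_card_filter_not, hS1card]
    have hne : (Sf 1).filter (fun j => ¬ j < w) = (Sf 1).filter (fun j => w < j) := by
      refine Finset.filter_congr ?_
      intro j hj
      have hj' := (hSmem 1 j).mp hj
      have hjw : j ≠ w := by
        intro hh
        rw [hh] at hj'
        omega
      constructor <;> intro hh <;> omega
    rw [hne] at hsplit
    have : cnt 1 w = ((Sf 1).filter (fun j => w < j)).card := rfl
    omega
end

section
/- Let ℓ ≥ 1 and 0 ≤ m ≤ ℓ. For every strict partition μ ∈ F_1^m(Λ_ℓ), the quantity p(μ) = Σ_{μ_i ≢ 0 (mod 3)} ⌊(μ_i − 1)/3⌋ (the sum over all parts of μ not divisible by 3) equals C(ℓ, 2); in particular it is independent of m and of the choice of μ. -/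
open scoped BigOperators

open MvPolynomial

lemma lamP_parts_eq (ℓ : ℕ) :
    (LamP ℓ).parts = ((List.range ℓ).map (fun i => 3 * i + 1) : List ℕ) := by
  simp only [LamP, Ptn.of]
  rw [Multiset.filter_eq_self.mpr]
  · simp [Multiset.range]
  · intro a ha
    simp only [Multiset.mem_map] at ha
    obtain ⟨i, _, rfl⟩ := ha
    omega

lemma lamP_sorted (ℓ : ℕ) :
    ((LamP ℓ).parts.sort (· ≤ ·)) = (List.range ℓ).map (fun i => 3 * i + 1) := by
  refine (fun h1 h2 h3 => List.Perm.eq_of_pairwise' (r := (· ≤ ·)) h2 h3 h1) ?_ ?_ ?_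
  · rw [← Multiset.coe_eq_coe, Multiset.sort_eq, lamP_parts_eq]
  · exact Multiset.pairwise_sort _ _
  · exact List.Pairwise.map _ (by intro a b h; omega) (List.pairwise_lt_range (n := ℓ))

lemma lamP_part_lt (ℓ i : ℕ) (h : i < ℓ) : (LamP ℓ).part i = 3 * (ℓ - 1 - i) + 1 := by
  unfold Ptn.part
  rw [lamP_sorted]
  rw [List.getD_eq_getElem _ _ (by simpa using h)]
  simp [List.getElem_reverse]

lemma lamP_part_ge (ℓ i : ℕ) (h : ℓ ≤ i) : (LamP ℓ).part i = 0 := by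
  unfold Ptn.part
  apply List.getD_eq_default
  simpa [lamP_sorted] using h

/-- For every `μ ∈ F_1^m(Λ_ℓ)`, `p(μ) = Σ_{μ_i ≢ 0 (mod 3)} ⌊(μ_i - 1)/3⌋ = C(ℓ,2)`. -/
theorem stmt13 (ℓ m : ℕ) (hℓ : 1 ≤ ℓ) (hm : m ≤ ℓ) (μ : Ptn) (hμ : μ ∈ F1Lam ℓ m) :
    ((μ.parts.filter (fun a => ¬ a % 3 = 0)).map (fun a => (a - 1) / 3)).sum
      = Nat.choose ℓ 2 := by
  obtain ⟨hs, hc, hsz, hlab⟩ := hμ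
  set L : List ℕ := ((μ.parts.sort (· ≤ ·)).reverse) with hL
  have hcoe : (L : Multiset ℕ) = μ.parts := by
    have h1 : (↑L : Multiset ℕ) = ↑(μ.parts.sort (· ≤ ·)) :=
      Multiset.coe_eq_coe.mpr (List.reverse_perm _)
    rw [h1, Multiset.sort_eq]
  have hpart : ∀ i, μ.part i = L.getD i 0 := fun i => rfl
  have key : ∀ i < ℓ, μ.part i = 3 * (ℓ - 1 - i) + 1 ∨ μ.part i = 3 * (ℓ - 1 - i) + 2 := by
    intro i hi
    have h1 := hc i
    rw [lamP_part_lt ℓ i hi] at h1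
    by_contra h
    push_neg at h
    have h2 : 3 * (ℓ - 1 - i) + 2 < μ.part i := by omega
    have := hlab i (3 * (ℓ - 1 - i) + 2) (by rw [lamP_part_lt ℓ i hi]; omega) h2
    omega
  have key0 : ∀ i, ℓ ≤ i → μ.part i = 0 := by
    intro i hi
    by_contra h
    have := hlab i 0 (by rw [lamP_part_ge ℓ i hi]) (by omega)
    omega
  have hlen : L.length = ℓ := by
    by_contra h
    rcases Nat.lt_or_ge L.length ℓ with h1 | h1
    · have hk := key L.length h1
      have h0 : μ.part L.length = 0 := List.getD_eq_default _ _ le_rfl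
      omega
    · have h1' : ℓ < L.length := by omega
      have hmem : L.getD ℓ 0 ∈ L := by
        rw [List.getD_eq_getElem _ _ h1']
        exact List.getElem_mem _
      have hpos : 0 < μ.part ℓ := by
        rw [hpart]
        exact μ.pos _ (by rw [← hcoe]; exact Multiset.mem_coe.mpr hmem)
      have := key0 ℓ le_rfl
      omega
  have hall : ∀ a ∈ μ.parts, ¬ a % 3 = 0 := by
    intro a ha
    rw [← hcoe, Multiset.mem_coe] at ha
    obtain ⟨i, hi, heq⟩ := List.mem_iff_getElem.mp ha
    have hi' : i < ℓ := hlen ▸ hi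
    have hk := key i hi'
    have hpi : μ.part i = L[i] := List.getD_eq_getElem _ _ hi
    omega
  rw [Multiset.filter_eq_self.mpr hall, ← hcoe]
  have hmap : L.map (fun a => (a - 1) / 3) = (List.range ℓ).map (fun i => ℓ - 1 - i) := by
    apply List.ext_getElem
    · simp [hlen]
    · intro i h1 h2
      simp only [List.getElem_map, List.getElem_range]
      have hi' : i < ℓ := by simpa using h2
      have hiL : i < L.length := by omega
      have hpi : μ.part i = L[i] := List.getD_eq_getElem _ _ hiL
      have hk := key i hi'
      omega
  have hms : (Multiset.map (fun a => (a - 1) / 3) (↑L : Multiset ℕ)).sum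
      = (L.map (fun a => (a - 1) / 3)).sum := rfl
  rw [hms, hmap]
  have hfs : ((List.range ℓ).map (fun i => ℓ - 1 - i)).sum
      = ∑ i ∈ Finset.range ℓ, (ℓ - 1 - i) := rfl
  rw [hfs, Finset.sum_range_reflect (fun i => i), Nat.choose_two_right]
  have := Finset.sum_range_id_mul_two ℓ
  omega
end

section
/- Let ℓ ≥ 1 and 0 ≤ m ≤ ℓ. For every strict partition μ ∈ F_1^m(Λ_ℓ), one has m(μ) = ℓ − 2m, where m(λ) denotes the number of parts of λ congruent to 1 modulo 3 minus the number of parts of λ congruent to 2 modulo 3. -/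
open scoped BigOperators

open MvPolynomial

section AuxStmt14

lemma sort_coe' (L : List ℕ) (h : L.Pairwise (· ≤ ·)) :
    Multiset.sort (↑L : Multiset ℕ) (· ≤ ·) = L :=
  List.Perm.eq_of_pairwise'
    (Multiset.pairwise_sort _ _) h (Multiset.coe_eq_coe.mp (Multiset.sort_eq _ _))

lemma length_sort' (l : Ptn) : (l.parts.sort (· ≤ ·)).length = l.length :=
  Multiset.length_sort _

lemma part_eq_zero' (l : Ptn) (i : ℕ) (h : l.length ≤ i) : l.part i = 0 := by
  unfold Ptn.part
  rw [List.getD_eq_getElem?_getD, List.getElem?_eq_none (by simp [length_sort' l, h]),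
    Option.getD_none]

lemma part_eq_getD' (l : Ptn) (i : ℕ) (h : i < l.length) :
    l.part i = (l.parts.sort (· ≤ ·)).getD (l.length - 1 - i) 0 := by
  unfold Ptn.part
  rw [List.getD_eq_getElem _ _ (by simp [length_sort' l, h]),
      List.getD_eq_getElem _ _ (by rw [length_sort']; omega), List.getElem_reverse]
  congr 1
  rw [length_sort']

lemma part_mem' (l : Ptn) (i : ℕ) (h : i < l.length) : l.part i ∈ l.parts := by
  rw [part_eq_getD' l i h, List.getD_eq_getElem _ _ (by rw [length_sort']; omega)]
  have hm : (l.parts.sort (· ≤ ·))[l.length - 1 - i]'(by rw [length_sort']; omega)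
      ∈ (l.parts.sort (· ≤ ·)) := List.getElem_mem _
  rwa [← Multiset.mem_coe, Multiset.sort_eq] at hm

lemma part_pos' (l : Ptn) (i : ℕ) (h : i < l.length) : 0 < l.part i :=
  l.pos _ (part_mem' l i h)

lemma parts_eq_map' (l : Ptn) : l.parts = ((List.range l.length).map l.part : Multiset ℕ) := by
  have hrev : (l.parts.sort (· ≤ ·)).reverse = (List.range l.length).map l.part := by
    apply List.ext_getElem
    · simp only [List.length_reverse, List.length_map, List.length_range]
      exact length_sort' l
    · intro i h1 h2
      simp only [List.length_reverse, length_sort'] at h1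
      simp only [List.getElem_map, List.getElem_range]
      show _ = l.part i
      rw [← List.getD_eq_getElem _ 0]
      rfl
  calc l.parts = ↑(l.parts.sort (· ≤ ·)) := (Multiset.sort_eq _ _).symm
    _ = ↑(l.parts.sort (· ≤ ·)).reverse := (Multiset.coe_reverse _).symm
    _ = _ := by rw [hrev]

lemma size_eq_sum' (l : Ptn) : l.size = ∑ i ∈ Finset.range l.length, l.part i := by
  rw [Ptn.size, parts_eq_map' l]
  rfl

lemma card_filter_parts' (l : Ptn) (p : ℕ → Prop) [DecidablePred p] :
    Multiset.card (l.parts.filter p) =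
      ((Finset.range l.length).filter (fun i => p (l.part i))).card := by
  rw [parts_eq_map' l]
  show Multiset.card (((Multiset.range l.length).map l.part).filter p) = _
  rw [← Multiset.countP_eq_card_filter, Multiset.countP_map]
  rfl

lemma LamP_parts (ℓ : ℕ) :
    (LamP ℓ).parts = ↑((List.range ℓ).map (fun i => 3 * i + 1)) := by
  have hpos : ∀ a ∈ (Multiset.range ℓ).map (fun i => 3 * i + 1), 0 < a := by
    intro a ha
    rw [Multiset.mem_map] at ha
    obtain ⟨i, -, rfl⟩ := ha
    omega
  show Multiset.filter (fun x => 0 < x) ((Multiset.range ℓ).map (fun i => 3 * i + 1)) = _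
  rw [Multiset.filter_eq_self.mpr hpos]
  rfl

lemma LamP_sorted (ℓ : ℕ) : ((List.range ℓ).map (fun i => 3 * i + 1)).Pairwise (· ≤ ·) :=
  List.Pairwise.map _ (fun h => by omega) (List.pairwise_lt_range (n := ℓ))

lemma LamP_length (ℓ : ℕ) : (LamP ℓ).length = ℓ := by
  rw [Ptn.length, LamP_parts]
  simp

lemma LamP_part (ℓ i : ℕ) :
    (LamP ℓ).part i = if i < ℓ then 3 * (ℓ - 1 - i) + 1 else 0 := by
  split_ifs with h
  · rw [part_eq_getD' _ _ (by rw [LamP_length]; omega), LamP_length, LamP_parts,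
      sort_coe' _ (LamP_sorted ℓ),
      List.getD_eq_getElem _ _ (by simp; omega)]
    simp only [List.getElem_map, List.getElem_range]
  · exact part_eq_zero' _ _ (by rw [LamP_length]; omega)

end AuxStmt14

/-- For every `μ ∈ F_1^m(Λ_ℓ)`, `m(μ) = ℓ - 2m`, where `m(λ)` is the number of parts
congruent to `1` mod `3` minus the number of parts congruent to `2` mod `3`. -/
theorem stmt14 (ℓ m : ℕ) (hℓ : 1 ≤ ℓ) (hm : m ≤ ℓ) (μ : Ptn) (hμ : μ ∈ F1Lam ℓ m) :
    (Multiset.card (μ.parts.filter (fun a => a % 3 = 1)) : ℤ)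
      - (Multiset.card (μ.parts.filter (fun a => a % 3 = 2)) : ℤ)
      = (ℓ : ℤ) - 2 * (m : ℤ) := by
  obtain ⟨hstrict, hcont, hsize, hlab⟩ := hμ
  have hlow : ∀ i < ℓ, 3 * (ℓ - 1 - i) + 1 ≤ μ.part i := by
    intro i hi
    have := hcont i
    rwa [LamP_part, if_pos hi] at this
  have hup : ∀ i < ℓ, μ.part i ≤ 3 * (ℓ - 1 - i) + 2 := by
    intro i hi
    by_contra h
    push_neg at h
    have := hlab i (3 * (ℓ - 1 - i) + 2) (by rw [LamP_part, if_pos hi]; omega) h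
    omega
  have hA : ∀ i, ℓ ≤ i → μ.part i = 0 := by
    intro i hi
    by_contra h
    have := hlab i 0 (by rw [LamP_part, if_neg (by omega)]) (Nat.pos_of_ne_zero h)
    omega
  have hlen : μ.length = ℓ := by
    rcases Nat.lt_trichotomy μ.length ℓ with h | h | h
    · have h1 := hlow μ.length h
      have h2 := part_eq_zero' μ μ.length le_rfl
      omega
    · exact h
    · have h1 := part_pos' μ ℓ h
      have h2 := hA ℓ le_rfl
      omega
  have hsum : ∑ i ∈ Finset.range ℓ, μ.part i
      = (∑ i ∈ Finset.range ℓ, (3 * (ℓ - 1 - i) + 1)) + m := by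
    have h1 := size_eq_sum' μ
    rw [hlen] at h1
    have h2 := size_eq_sum' (LamP ℓ)
    rw [LamP_length] at h2
    have h3 : ∑ i ∈ Finset.range ℓ, (LamP ℓ).part i
        = ∑ i ∈ Finset.range ℓ, (3 * (ℓ - 1 - i) + 1) := by
      apply Finset.sum_congr rfl
      intro i hi
      rw [LamP_part, if_pos (Finset.mem_range.mp hi)]
    rw [h3] at h2
    rw [← h1, ← h2, hsize]
  have hdiff : ∑ i ∈ Finset.range ℓ, (μ.part i - (3 * (ℓ - 1 - i) + 1)) = m := by
    have h1 : ∑ i ∈ Finset.range ℓ, μ.part i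
        = ∑ i ∈ Finset.range ℓ, ((3 * (ℓ - 1 - i) + 1) + (μ.part i - (3 * (ℓ - 1 - i) + 1))) := by
      apply Finset.sum_congr rfl
      intro i hi
      have := hlow i (Finset.mem_range.mp hi)
      omega
    rw [Finset.sum_add_distrib] at h1
    omega
  have hc2 : ((Finset.range ℓ).filter (fun i => μ.part i % 3 = 2)).card = m := by
    rw [Finset.card_filter, ← hdiff]
    apply Finset.sum_congr rfl
    intro i hi
    have h1 := hlow i (Finset.mem_range.mp hi)
    have h2 := hup i (Finset.mem_range.mp hi)
    split_ifs with h <;> omega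
  have hc12 : ((Finset.range ℓ).filter (fun i => μ.part i % 3 = 1)).card
      + ((Finset.range ℓ).filter (fun i => μ.part i % 3 = 2)).card = ℓ := by
    have heq : (Finset.range ℓ).filter (fun i => μ.part i % 3 = 2)
        = (Finset.range ℓ).filter (fun i => ¬ μ.part i % 3 = 1) := by
      apply Finset.filter_congr
      intro i hi
      have h1 := hlow i (Finset.mem_range.mp hi)
      have h2 := hup i (Finset.mem_range.mp hi)
      constructor <;> intro h <;> omega
    rw [heq, Finset.card_filter_add_card_filter_not, Finset.card_range]
  rw [card_filter_parts' μ (fun a => a % 3 = 1), card_filter_parts' μ (fun a => a % 3 = 2), hlen]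
  omega
end

section
/- Let ℓ ≥ 1 be an integer. Then |F_1^m(Λ_ℓ)| = C(ℓ, m) for 0 ≤ m ≤ ℓ; and for odd ℓ, |F_1^m(Δ_ℓ)| = C(ℓ+1, m) for 0 ≤ m ≤ ℓ+1. -/
open scoped BigOperators

open MvPolynomial

namespace Aux
open Ptn

lemma ptn_ext {a b : Ptn} (h : a.parts = b.parts) : a = b := by
  cases a; cases b; simpa using h

def descList (l : Ptn) : List ℕ := (l.parts.sort (· ≤ ·)).reverse

lemma coe_descList (l : Ptn) : (↑(descList l) : Multiset ℕ) = l.parts := by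
  rw [descList, Multiset.coe_reverse, Multiset.sort_eq]

lemma descList_sorted (l : Ptn) : List.Pairwise (· ≥ ·) (descList l) := by
  rw [descList, List.pairwise_reverse]
  exact List.Pairwise.imp (fun h => h) (Multiset.pairwise_sort l.parts (· ≤ ·))

lemma part_eq_getD (l : Ptn) (i : ℕ) : l.part i = (descList l).getD i 0 := rfl

lemma length_descList (l : Ptn) : (descList l).length = l.length := by
  rw [← Multiset.coe_card, coe_descList]; rfl

lemma part_eq_of_sorted {l : Ptn} {L : List ℕ} (h : l.parts = ↑L)
    (hs : List.Pairwise (· ≥ ·) L) (i : ℕ) : l.part i = L.getD i 0 := by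
  have hperm : (descList l).Perm L := by
    rw [← Multiset.coe_eq_coe, coe_descList, h]
  rw [part_eq_getD, List.Perm.eq_of_pairwise' (descList_sorted l) hs hperm]

lemma getD_filter_pos {L : List ℕ} (hs : List.Pairwise (· ≥ ·) L) (i : ℕ) :
    (L.filter (fun x => decide (0 < x))).getD i 0 = L.getD i 0 := by
  induction L generalizing i with
  | nil => simp
  | cons a t ih =>
    rcases List.pairwise_cons.mp hs with ⟨ha, ht⟩
    by_cases h0 : 0 < a
    · rw [List.filter_cons_of_pos (by simpa using h0)]
      cases i with
      | zero => rfl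
      | succ n => simpa using ih ht n
    · have ha0 : a = 0 := by omega
      have hall : ∀ x ∈ a :: t, x = 0 := by
        intro x hx
        rcases List.mem_cons.mp hx with rfl | hx
        · exact ha0
        · have := ha x hx; omega
      have hf : (a :: t).filter (fun x => decide (0 < x)) = [] := by
        rw [List.filter_eq_nil_iff]
        intro x hx
        have := hall x hx
        simp [this]
      rw [hf]
      simp only [List.getD_nil]
      rcases Nat.lt_or_ge i (a :: t).length with hi | hi
      · rw [List.getD_eq_getElem _ _ hi]
        exact (hall _ (List.getElem_mem hi)).symm
      · rw [List.getD_eq_default _ _ hi]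

lemma part_of_sorted {L : List ℕ} (hs : List.Pairwise (· ≥ ·) L) (i : ℕ) :
    (Ptn.of ↑L).part i = L.getD i 0 := by
  have hparts : (Ptn.of ↑L).parts = ↑(L.filter (fun x => decide (0 < x))) := by
    simp [Ptn.of, Multiset.filter_coe]
  rw [part_eq_of_sorted hparts (hs.filter _), getD_filter_pos hs]

lemma part_pos_of_lt_length {l : Ptn} {i : ℕ} (h : i < l.length) : 0 < l.part i := by
  rw [part_eq_getD]
  have hlen : i < (descList l).length := by rwa [length_descList]
  rw [List.getD_eq_getElem _ _ hlen]
  apply l.pos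
  rw [← coe_descList]
  exact_mod_cast List.getElem_mem hlen

lemma part_eq_zero_of_length_le {l : Ptn} {i : ℕ} (h : l.length ≤ i) : l.part i = 0 := by
  rw [part_eq_getD, List.getD_eq_default]
  rwa [length_descList]

lemma lt_length_iff {l : Ptn} {i : ℕ} : i < l.length ↔ 0 < l.part i := by
  constructor
  · exact part_pos_of_lt_length
  · intro h
    by_contra hc
    rw [part_eq_zero_of_length_le (by omega)] at h
    omega

lemma length_eq_of_part_eq {l l' : Ptn} (h : ∀ i, l.part i = l'.part i) :
    l.length = l'.length := by
  have h1 : ∀ i, i < l.length ↔ i < l'.length := by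
    intro i; rw [lt_length_iff, lt_length_iff, h i]
  rcases Nat.lt_trichotomy l.length l'.length with hc | hc | hc
  · have := (h1 l.length).mpr hc; omega
  · exact hc
  · have := (h1 l'.length).mp hc; omega

lemma parts_eq_map_part (l : Ptn) :
    l.parts = ↑((List.range l.length).map l.part) := by
  rw [← coe_descList, Multiset.coe_eq_coe]
  have : descList l = (List.range l.length).map l.part := by
    apply List.ext_getElem
    · simp [length_descList]
    · intro i h1 h2
      have hi : i < l.length := by rwa [length_descList] at h1
      simp only [List.getElem_map, List.getElem_range]
      rw [part_eq_getD, List.getD_eq_getElem _ _ h1]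
  rw [this]

lemma ptn_ext_part {l l' : Ptn} (h : ∀ i, l.part i = l'.part i) : l = l' := by
  apply ptn_ext
  rw [parts_eq_map_part l, parts_eq_map_part l', length_eq_of_part_eq h]
  congr 1
  exact List.map_congr_left (fun i _ => h i)

lemma size_of (s : Multiset ℕ) : (Ptn.of s).size = s.sum := by
  have h := Multiset.filter_add_not (fun x => 0 < x) s
  show (Multiset.filter (fun x => 0 < x) s).sum = s.sum
  conv_rhs => rw [← h]
  rw [Multiset.sum_add]
  have h2 : (Multiset.filter (fun x => ¬ 0 < x) s).sum = 0 := by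
    apply Multiset.sum_eq_zero
    intro x hx
    have := (Multiset.mem_filter.mp hx).2
    omega
  omega

lemma range_map_rev (n : ℕ) (f : ℕ → ℕ) :
    ((List.range n).map f).Perm ((List.range n).map (fun i => f (n - 1 - i))) := by
  have h1 : (List.range n).map (fun i => f (n - 1 - i))
      = ((List.range n).map (fun i => n - 1 - i)).map f := by
    rw [List.map_map]; rfl
  have h2 : (List.range n).map (fun i => n - 1 - i) = (List.range n).reverse := by
    apply List.ext_getElem
    · simp
    · intro i hi1 hi2
      simp only [List.getElem_map, List.getElem_range, List.getElem_reverse, List.length_range]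
  rw [h1, h2]
  exact ((List.reverse_perm _).map f).symm

lemma sum_list_range (f : ℕ → ℕ) (n : ℕ) :
    ((List.range n).map f).sum = ∑ i ∈ Finset.range n, f i := by
  induction n with
  | zero => simp
  | succ k ih => rw [List.range_succ, List.map_append, List.sum_append,
      Finset.sum_range_succ, ih]; simp

/-! ### The Λ side -/

def lamVal (ℓ : ℕ) (S : Finset ℕ) (i : ℕ) : ℕ :=
  3 * (ℓ - 1 - i) + 1 + (if i ∈ S then 1 else 0)

def lamList (ℓ : ℕ) (S : Finset ℕ) : List ℕ := (List.range ℓ).map (lamVal ℓ S)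

def PhiLam (ℓ : ℕ) (S : Finset ℕ) : Ptn := Ptn.of ↑(lamList ℓ S)

lemma lamList_pairwise (ℓ : ℕ) (S : Finset ℕ) :
    List.Pairwise (· > ·) (lamList ℓ S) := by
  rw [lamList, List.pairwise_iff_getElem]
  intro i j hi hj hij
  simp only [List.length_map, List.length_range] at hi hj
  simp only [List.getElem_map, List.getElem_range, lamVal]
  have e1 : (if i ∈ S then 1 else 0) ≤ 1 := by split <;> omega
  have e2 : (if j ∈ S then 1 else 0) ≤ 1 := by split <;> omega
  omega

lemma lamList_sorted (ℓ : ℕ) (S : Finset ℕ) :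
    List.Pairwise (· ≥ ·) (lamList ℓ S) :=
  (lamList_pairwise ℓ S).imp (fun h => le_of_lt h)

lemma part_PhiLam (ℓ : ℕ) (S : Finset ℕ) (i : ℕ) :
    (PhiLam ℓ S).part i = if i < ℓ then lamVal ℓ S i else 0 := by
  rw [PhiLam, part_of_sorted (lamList_sorted ℓ S)]
  by_cases hi : i < ℓ
  · rw [List.getD_eq_getElem _ _ (by simp [lamList, hi]), if_pos hi]
    simp [lamList]
  · rw [List.getD_eq_default _ _ (by simp [lamList]; omega), if_neg hi]

lemma LamP_eq (ℓ : ℕ) : LamP ℓ = PhiLam ℓ ∅ := by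
  rw [LamP, PhiLam]
  congr 1
  show Multiset.map _ (Multiset.range ℓ) = _
  rw [Multiset.range, Multiset.map_coe, Multiset.coe_eq_coe, lamList]
  have : ((List.range ℓ).map (lamVal ℓ ∅))
      = (List.range ℓ).map (fun i => 3 * (ℓ - 1 - i) + 1) := by
    apply List.map_congr_left
    intro i _
    simp [lamVal]
  rw [this]
  exact range_map_rev ℓ (fun i => 3 * i + 1)

lemma part_LamP (ℓ : ℕ) (i : ℕ) :
    (LamP ℓ).part i = if i < ℓ then 3 * (ℓ - 1 - i) + 1 else 0 := by
  rw [LamP_eq, part_PhiLam]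
  simp [lamVal]

lemma size_PhiLam (ℓ : ℕ) (S : Finset ℕ) (hS : S ⊆ Finset.range ℓ) :
    (PhiLam ℓ S).size = (LamP ℓ).size + S.card := by
  have hgen : ∀ T : Finset ℕ, (PhiLam ℓ T).size = ∑ i ∈ Finset.range ℓ, lamVal ℓ T i := by
    intro T
    rw [PhiLam, size_of]
    show (lamList ℓ T).sum = _
    rw [lamList, sum_list_range]
  rw [hgen, LamP_eq, hgen]
  rw [show (fun i => lamVal ℓ S i) = fun i => lamVal ℓ ∅ i + (if i ∈ S then 1 else 0) by
    funext i; simp [lamVal]]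
  rw [Finset.sum_add_distrib]
  congr 1
  rw [Finset.sum_ite_mem, Finset.inter_eq_right.mpr hS, Finset.sum_const]
  simp

lemma PhiLam_mem (ℓ m : ℕ) (S : Finset ℕ) (hS : S ∈ Finset.powersetCard m (Finset.range ℓ)) :
    PhiLam ℓ S ∈ F1Lam ℓ m := by
  rw [Finset.mem_powersetCard] at hS
  obtain ⟨hsub, hcard⟩ := hS
  refine ⟨?_, ?_, ?_, ?_⟩
  · show (PhiLam ℓ S).parts.Nodup
    have : (PhiLam ℓ S).parts = ↑((lamList ℓ S).filter (fun x => decide (0 < x))) := by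
      simp [PhiLam, Ptn.of, Multiset.filter_coe]
    rw [this, Multiset.coe_nodup]
    exact ((lamList_pairwise ℓ S).imp (fun h => Nat.ne_of_gt h)).filter _
  · intro i
    rw [part_PhiLam, part_LamP]
    by_cases hi : i < ℓ
    · rw [if_pos hi, if_pos hi, lamVal]; omega
    · rw [if_neg hi, if_neg hi]
  · rw [size_PhiLam ℓ S hsub, hcard]
  · intro i j h1 h2
    rw [part_LamP] at h1
    rw [part_PhiLam] at h2
    by_cases hi : i < ℓ
    · rw [if_pos hi] at h1
      rw [if_pos hi, lamVal] at h2
      have : (if i ∈ S then 1 else 0) ≤ 1 := by split <;> omega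
      omega
    · rw [if_neg hi] at h2; omega

lemma F1Lam_mem (ℓ m : ℕ) (mu : Ptn) (hmu : mu ∈ F1Lam ℓ m) :
    ∃ S ∈ Finset.powersetCard m (Finset.range ℓ), PhiLam ℓ S = mu := by
  obtain ⟨hstrict, hcont, hsize, hlab⟩ := hmu
  have hub : ∀ i < ℓ, mu.part i ≤ 3 * (ℓ - 1 - i) + 1 + 1 := by
    intro i hi
    by_contra hc
    have h2 := hlab i (3 * (ℓ - 1 - i) + 1 + 1)
      (by rw [part_LamP, if_pos hi]; omega) (by omega)
    omega
  have hlb : ∀ i < ℓ, 3 * (ℓ - 1 - i) + 1 ≤ mu.part i := by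
    intro i hi
    have := hcont i
    rwa [part_LamP, if_pos hi] at this
  have hz : ∀ i, ℓ ≤ i → mu.part i = 0 := by
    intro i hi
    by_contra hc
    have h2 := hlab i 0 (by rw [part_LamP, if_neg (by omega)]) (by omega)
    omega
  classical
  set S : Finset ℕ := (Finset.range ℓ).filter
    (fun i => mu.part i = 3 * (ℓ - 1 - i) + 1 + 1) with hSdef
  have hsub : S ⊆ Finset.range ℓ := Finset.filter_subset _ _
  have heq : PhiLam ℓ S = mu := by
    apply ptn_ext_part
    intro i
    rw [part_PhiLam]
    by_cases hi : i < ℓ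
    · rw [if_pos hi, lamVal]
      have hmem : i ∈ S ↔ mu.part i = 3 * (ℓ - 1 - i) + 1 + 1 := by
        rw [hSdef, Finset.mem_filter, Finset.mem_range]
        exact ⟨fun h => h.2, fun h => ⟨hi, h⟩⟩
      have := hub i hi
      have := hlb i hi
      by_cases hS : i ∈ S
      · rw [if_pos hS]
        have := hmem.mp hS
        omega
      · rw [if_neg hS]
        have := (not_iff_not.mpr hmem).mp hS
        omega
    · rw [if_neg hi]
      exact (hz i (by omega)).symm
  refine ⟨S, ?_, heq⟩
  rw [Finset.mem_powersetCard]
  refine ⟨hsub, ?_⟩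
  have : mu.size = (LamP ℓ).size + S.card := by
    rw [← heq, size_PhiLam ℓ S hsub]
  omega

/-! ### The Δ side -/

def delVal (ℓ : ℕ) (S : Finset ℕ) (i : ℕ) : ℕ := (ℓ - i) + (if i ∈ S then 1 else 0)

def delList (ℓ : ℕ) (S : Finset ℕ) : List ℕ := (List.range (ℓ + 1)).map (delVal ℓ S)

def PhiDel (ℓ : ℕ) (S : Finset ℕ) : Ptn := Ptn.of ↑(delList ℓ S)

lemma delList_sorted (ℓ : ℕ) (S : Finset ℕ) :
    List.Pairwise (· ≥ ·) (delList ℓ S) := by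
  rw [delList, List.pairwise_iff_getElem]
  intro i j hi hj hij
  simp only [List.length_map, List.length_range] at hi hj
  simp only [List.getElem_map, List.getElem_range, delVal]
  have e1 : (if i ∈ S then 1 else 0) ≤ 1 := by split <;> omega
  have e2 : (if j ∈ S then 1 else 0) ≤ 1 := by split <;> omega
  show _ ≥ _
  omega

lemma part_PhiDel (ℓ : ℕ) (S : Finset ℕ) (i : ℕ) :
    (PhiDel ℓ S).part i = if i < ℓ + 1 then delVal ℓ S i else 0 := by
  rw [PhiDel, part_of_sorted (delList_sorted ℓ S)]
  by_cases hi : i < ℓ + 1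
  · rw [List.getD_eq_getElem _ _ (by simp [delList, hi]), if_pos hi]
    simp [delList]
  · rw [List.getD_eq_default _ _ (by simp [delList]; omega), if_neg hi]

lemma DelP_eq (ℓ : ℕ) : DelP ℓ = PhiDel ℓ ∅ := by
  rw [DelP, PhiDel]
  congr 1
  rw [Multiset.range, Multiset.coe_eq_coe, delList]
  have : ((List.range (ℓ + 1)).map (delVal ℓ ∅))
      = (List.range (ℓ + 1)).map (fun i => (ℓ + 1) - 1 - i) := by
    apply List.map_congr_left
    intro i _
    simp [delVal]
  rw [this]
  have := range_map_rev (ℓ + 1) (fun i => i)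
  simpa using this

lemma part_DelP (ℓ : ℕ) (i : ℕ) : (DelP ℓ).part i = ℓ - i := by
  rw [DelP_eq, part_PhiDel]
  by_cases hi : i < ℓ + 1
  · rw [if_pos hi]; simp [delVal]
  · rw [if_neg hi]; omega

lemma size_PhiDel (ℓ : ℕ) (S : Finset ℕ) (hS : S ⊆ Finset.range (ℓ + 1)) :
    (PhiDel ℓ S).size = (DelP ℓ).size + S.card := by
  have hgen : ∀ T : Finset ℕ,
      (PhiDel ℓ T).size = ∑ i ∈ Finset.range (ℓ + 1), delVal ℓ T i := by
    intro T
    rw [PhiDel, size_of]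
    show (delList ℓ T).sum = _
    rw [delList, sum_list_range]
  rw [hgen, DelP_eq, hgen]
  rw [show (fun i => delVal ℓ S i) = fun i => delVal ℓ ∅ i + (if i ∈ S then 1 else 0) by
    funext i; simp [delVal]]
  rw [Finset.sum_add_distrib]
  congr 1
  rw [Finset.sum_ite_mem, Finset.inter_eq_right.mpr hS, Finset.sum_const]
  simp

lemma PhiDel_mem (ℓ m : ℕ) (hodd : Odd ℓ) (S : Finset ℕ)
    (hS : S ∈ Finset.powersetCard m (Finset.range (ℓ + 1))) :
    PhiDel ℓ S ∈ F1Del ℓ m := by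
  rw [Finset.mem_powersetCard] at hS
  obtain ⟨hsub, hcard⟩ := hS
  have hl2 : ℓ % 2 = 1 := Nat.odd_iff.mp hodd
  refine ⟨?_, ?_, ?_⟩
  · intro i
    rw [part_PhiDel, part_DelP]
    by_cases hi : i < ℓ + 1
    · rw [if_pos hi, delVal]; omega
    · rw [if_neg hi]; omega
  · rw [size_PhiDel ℓ S hsub, hcard]
  · intro i j h1 h2
    rw [part_DelP] at h1
    rw [part_PhiDel] at h2
    by_cases hi : i < ℓ + 1
    · rw [if_pos hi, delVal] at h2
      have : (if i ∈ S then 1 else 0) ≤ 1 := by split <;> omega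
      omega
    · rw [if_neg hi] at h2; omega

lemma F1Del_mem (ℓ m : ℕ) (hodd : Odd ℓ) (mu : Ptn) (hmu : mu ∈ F1Del ℓ m) :
    ∃ S ∈ Finset.powersetCard m (Finset.range (ℓ + 1)), PhiDel ℓ S = mu := by
  obtain ⟨hcont, hsize, hlab⟩ := hmu
  have hl2 : ℓ % 2 = 1 := Nat.odd_iff.mp hodd
  have hub : ∀ i < ℓ + 1, mu.part i ≤ ℓ - i + 1 := by
    intro i hi
    by_contra hc
    have h2 := hlab i (ℓ - i + 1) (by rw [part_DelP]; omega) (by omega)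
    omega
  have hlb : ∀ i, ℓ - i ≤ mu.part i := by
    intro i
    have := hcont i
    rwa [part_DelP] at this
  have hz1 : mu.part (ℓ + 1) = 0 := by
    by_contra hc
    have h2 := hlab (ℓ + 1) 0 (by rw [part_DelP]; omega) (by omega)
    omega
  have hz : ∀ i, ℓ + 1 ≤ i → mu.part i = 0 := by
    intro i hi
    have hlen : mu.length ≤ ℓ + 1 := by
      by_contra hc
      have := part_pos_of_lt_length (l := mu) (i := ℓ + 1) (by omega)
      omega
    exact part_eq_zero_of_length_le (by omega)
  classical
  set S : Finset ℕ := (Finset.range (ℓ + 1)).filter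
    (fun i => mu.part i = ℓ - i + 1) with hSdef
  have hsub : S ⊆ Finset.range (ℓ + 1) := Finset.filter_subset _ _
  have heq : PhiDel ℓ S = mu := by
    apply ptn_ext_part
    intro i
    rw [part_PhiDel]
    by_cases hi : i < ℓ + 1
    · rw [if_pos hi, delVal]
      have hmem : i ∈ S ↔ mu.part i = ℓ - i + 1 := by
        rw [hSdef, Finset.mem_filter, Finset.mem_range]
        exact ⟨fun h => h.2, fun h => ⟨hi, h⟩⟩
      have := hub i hi
      have := hlb i
      by_cases hS : i ∈ S
      · rw [if_pos hS]
        have := hmem.mp hS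
        omega
      · rw [if_neg hS]
        have := (not_iff_not.mpr hmem).mp hS
        omega
    · rw [if_neg hi]
      exact (hz i (by omega)).symm
  refine ⟨S, ?_, heq⟩
  rw [Finset.mem_powersetCard]
  refine ⟨hsub, ?_⟩
  have : mu.size = (DelP ℓ).size + S.card := by
    rw [← heq, size_PhiDel ℓ S hsub]
  omega

end Aux

/-- `|F_1^m(Λ_ℓ)| = C(ℓ,m)` for `0 ≤ m ≤ ℓ`, and for odd `ℓ`,
`|F_1^m(Δ_ℓ)| = C(ℓ+1,m)` for `0 ≤ m ≤ ℓ+1`. -/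
theorem stmt16 (ℓ : ℕ) (hℓ : 1 ≤ ℓ) :
    (∀ m ≤ ℓ, (F1Lam ℓ m).ncard = Nat.choose ℓ m) ∧
    (Odd ℓ → ∀ m ≤ ℓ + 1, (F1Del ℓ m).ncard = Nat.choose (ℓ + 1) m) := by
  classical
  constructor
  · intro m hm
    have hset : F1Lam ℓ m =
        ↑((Finset.powersetCard m (Finset.range ℓ)).image (Aux.PhiLam ℓ)) := by
      ext mu
      simp only [Finset.coe_image, Set.mem_image, Finset.mem_coe]
      constructor
      · intro h
        obtain ⟨S, hS, hEq⟩ := Aux.F1Lam_mem ℓ m mu h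
        exact ⟨S, hS, hEq⟩
      · rintro ⟨S, hS, rfl⟩
        exact Aux.PhiLam_mem ℓ m S hS
    rw [hset, Set.ncard_coe_finset, Finset.card_image_of_injOn, Finset.card_powersetCard,
      Finset.card_range]
    intro S hS T hT hST
    simp only [Finset.mem_coe, Finset.mem_powersetCard] at hS hT
    ext i
    by_cases hi : i < ℓ
    · have h1 := congrArg (fun p => Ptn.part p i) hST
      simp only [Aux.part_PhiLam, if_pos hi, Aux.lamVal] at h1
      by_cases h2 : i ∈ S <;> by_cases h3 : i ∈ T <;> simp [h2, h3] at h1 ⊢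
    · constructor
      · intro h; exact absurd (Finset.mem_range.mp (hS.1 h)) hi
      · intro h; exact absurd (Finset.mem_range.mp (hT.1 h)) hi
  · intro hodd m hm
    have hset : F1Del ℓ m =
        ↑((Finset.powersetCard m (Finset.range (ℓ + 1))).image (Aux.PhiDel ℓ)) := by
      ext mu
      simp only [Finset.coe_image, Set.mem_image, Finset.mem_coe]
      constructor
      · intro h
        obtain ⟨S, hS, hEq⟩ := Aux.F1Del_mem ℓ m hodd mu h
        exact ⟨S, hS, hEq⟩
      · rintro ⟨S, hS, rfl⟩
        exact Aux.PhiDel_mem ℓ m hodd S hS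
    rw [hset, Set.ncard_coe_finset, Finset.card_image_of_injOn, Finset.card_powersetCard,
      Finset.card_range]
    intro S hS T hT hST
    simp only [Finset.mem_coe, Finset.mem_powersetCard] at hS hT
    ext i
    by_cases hi : i < ℓ + 1
    · have h1 := congrArg (fun p => Ptn.part p i) hST
      simp only [Aux.part_PhiDel, if_pos hi, Aux.delVal] at h1
      by_cases h2 : i ∈ S <;> by_cases h3 : i ∈ T <;> simp [h2, h3] at h1 ⊢
    · constructor
      · intro h; exact absurd (Finset.mem_range.mp (hS.1 h)) hi
      · intro h; exact absurd (Finset.mem_range.mp (hT.1 h)) hi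
end
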